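/- Let H be a complex Hilbert space and S an arbitrary set. A kernel Γ : S → S → (H →L[ℂ] H) satisfies: for every finitely supported h : S → H the sum ∑_{s,t} ⟨(Γ s t) (h s), h t⟩ is a nonnegative real number, if and only if there exist a complex Hilbert space K and a family of bounded operators V : S → (H →L[ℂ] K) such that Γ s t = (V t)† ∘ (V s) for all s, t ∈ S and the closed linear span of the set { (V s) h : s ∈ S, h ∈ H } is all of K. -/

import Mathlib

open ContinuousLinearMap
open scoped InnerProductSpace

universe u v

namespace KolmogorovAux

variable {H : Type u} [NormedAddCommGroup H] [InnerProductSpace ℂ H]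
variable {S : Type v} (Γ : S → S → (H →L[ℂ] H))

/-- The candidate semi-inner product on finitely supported `H`-valued functions. -/
noncomputable def kin (f g : S →₀ H) : ℂ :=
  f.sum fun s x => g.sum fun t y => ⟪Γ s t x, y⟫_ℂ

theorem kin_self (f : S →₀ H) :
    kin Γ f f = ∑ s ∈ f.support, ∑ t ∈ f.support, ⟪(Γ s t) (f s), f t⟫_ℂ := rfl

theorem kin_single (s t : S) (x y : H) :
    kin Γ (Finsupp.single s x) (Finsupp.single t y) = ⟪(Γ s t) x, y⟫_ℂ := by
  unfold kin
  rw [Finsupp.sum_single_index (by simp), Finsupp.sum_single_index (by simp)]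

theorem kin_add_left (f g h : S →₀ H) :
    kin Γ (f + g) h = kin Γ f h + kin Γ g h := by
  unfold kin
  classical
  exact Finsupp.sum_add_index (by simp) (by intro a _ b₁ b₂; simp [inner_add_left, Finsupp.sum_add])

theorem kin_add_right (f g h : S →₀ H) :
    kin Γ f (g + h) = kin Γ f g + kin Γ f h := by
  unfold kin
  rw [← Finsupp.sum_add]
  congr 1; ext s x
  classical
  exact Finsupp.sum_add_index (by simp) (by intro a _ b₁ b₂; simp [inner_add_right])

theorem kin_smul_left (r : ℂ) (f g : S →₀ H) :
    kin Γ (r • f) g = (starRingEnd ℂ) r * kin Γ f g := by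
  unfold kin
  rw [Finsupp.sum_smul_index' (by simp)]
  simp only [map_smul, inner_smul_left, Finsupp.sum, Finset.mul_sum]

theorem kin_smul_right (r : ℂ) (f g : S →₀ H) :
    kin Γ f (r • g) = r * kin Γ f g := by
  unfold kin
  have key : ∀ (s : S) (x : H), ((r • g).sum fun t y => ⟪(Γ s t) x, y⟫_ℂ)
      = r * g.sum fun t y => ⟪(Γ s t) x, y⟫_ℂ := by
    intro s x
    rw [Finsupp.sum_smul_index' (by simp)]
    simp only [inner_smul_right, Finsupp.sum, Finset.mul_sum]
  simp only [Finsupp.sum] at key ⊢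
  rw [Finset.mul_sum]
  exact Finset.sum_congr rfl fun s _ => key s (f s)

theorem kin_conj_symm (hp : ∀ f : S →₀ H, (kin Γ f f).im = 0) (f g : S →₀ H) :
    (starRingEnd ℂ) (kin Γ g f) = kin Γ f g := by
  have e1 : kin Γ (f + g) (f + g) = kin Γ f f + kin Γ f g + (kin Γ g f + kin Γ g g) := by
    rw [kin_add_left, kin_add_right, kin_add_right]
  have e2 : kin Γ (f + Complex.I • g) (f + Complex.I • g)
      = kin Γ f f + Complex.I * kin Γ f g + (-Complex.I * kin Γ g f + kin Γ g g) := by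
    rw [kin_add_left, kin_add_right, kin_add_right, kin_smul_right, kin_smul_left,
      kin_smul_left, kin_smul_right]
    simp only [Complex.conj_I]; ring_nf; simp [Complex.I_sq]
  have i1 := hp (f + g)
  rw [e1] at i1
  simp only [Complex.add_im, hp f, hp g] at i1
  have i2 := hp (f + Complex.I • g)
  rw [e2] at i2
  simp only [Complex.add_im, Complex.mul_im, Complex.neg_im, Complex.neg_re, Complex.I_re,
    Complex.I_im, hp f, hp g] at i2
  apply Complex.ext <;>
    simp only [Complex.conj_re, Complex.conj_im] <;> linarith

end KolmogorovAux

open KolmogorovAux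

/-- **Theorem 4.5 (single Hilbert space): Kolmogorov factorization.**  A `B(H)`-valued
kernel `Γ` on a set `S` is positive definite in the vector sense iff there is a Hilbert
space `K` and a family of bounded operators `V s : H → K` with total range such that
`Γ s t = (V t)† ∘ (V s)` for all `s, t`. -/
theorem kernel_posDef_iff_factorization
    {H : Type u} [NormedAddCommGroup H] [InnerProductSpace ℂ H] [CompleteSpace H]
    {S : Type v} (Γ : S → S → (H →L[ℂ] H)) :
    (∀ h : S →₀ H,
        0 ≤ (∑ s ∈ h.support, ∑ t ∈ h.support, ⟪(Γ s t) (h s), h t⟫_ℂ).re ∧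
        (∑ s ∈ h.support, ∑ t ∈ h.support, ⟪(Γ s t) (h s), h t⟫_ℂ).im = 0) ↔
      ∃ (K : Type (max u v)) (_ : NormedAddCommGroup K) (_ : InnerProductSpace ℂ K)
        (_ : CompleteSpace K) (V : S → (H →L[ℂ] K)),
        (∀ s t : S, Γ s t = adjoint (V t) ∘L (V s)) ∧
        (Submodule.span ℂ {x : K | ∃ (s : S) (h : H), (V s) h = x}).topologicalClosure =
          ⊤ := by
  constructor
  · intro hp
    classical
    have hker : ∀ f : S →₀ H, 0 ≤ (kin Γ f f).re ∧ (kin Γ f f).im = 0 := by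
      intro f; rw [kin_self]; exact hp f
    letI c : PreInnerProductSpace.Core ℂ (S →₀ H) :=
      { inner := kin Γ
        conj_inner_symm := kin_conj_symm Γ (fun f => (hker f).2)
        re_inner_nonneg := fun f => by simpa using (hker f).1
        add_left := kin_add_left Γ
        smul_left := fun f g r => kin_smul_left Γ r f g }
    letI : SeminormedAddCommGroup (S →₀ H) := InnerProductSpace.Core.toSeminormedAddCommGroup (c := c)
    letI : NormedSpace ℂ (S →₀ H) := InnerProductSpace.Core.toNormedSpace (c := c)
    letI : InnerProductSpace ℂ (S →₀ H) :=
      { inner := kin Γ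
        norm_sq_eq_re_inner := fun f => by
          have hn : ‖f‖ = Real.sqrt (RCLike.re (kin Γ f f)) := rfl
          rw [hn, Real.sq_sqrt (by simpa using (hker f).1)]
        conj_inner_symm := c.conj_inner_symm
        add_left := c.add_left
        smul_left := c.smul_left }
    set K := UniformSpace.Completion (S →₀ H) with hK
    have hnorm : ∀ (s : S) (x : H), ‖(Finsupp.single s x : S →₀ H)‖
        ≤ Real.sqrt ‖Γ s s‖ * ‖x‖ := by
      intro s x
      have h1 : ‖(Finsupp.single s x : S →₀ H)‖
          = Real.sqrt (RCLike.re (kin Γ (Finsupp.single s x) (Finsupp.single s x))) := rfl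
      rw [h1, kin_single]
      have h2 : RCLike.re (⟪(Γ s s) x, x⟫_ℂ) ≤ ‖Γ s s‖ * (‖x‖ * ‖x‖) := by
        calc RCLike.re (⟪(Γ s s) x, x⟫_ℂ) ≤ ‖(⟪(Γ s s) x, x⟫_ℂ)‖ := RCLike.re_le_norm _
          _ ≤ ‖(Γ s s) x‖ * ‖x‖ := norm_inner_le_norm _ _
          _ ≤ ‖Γ s s‖ * ‖x‖ * ‖x‖ :=
            mul_le_mul_of_nonneg_right ((Γ s s).le_opNorm x) (norm_nonneg x)
          _ = ‖Γ s s‖ * (‖x‖ * ‖x‖) := by ring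
      calc Real.sqrt (RCLike.re (⟪(Γ s s) x, x⟫_ℂ))
          ≤ Real.sqrt (‖Γ s s‖ * (‖x‖ * ‖x‖)) := Real.sqrt_le_sqrt h2
        _ = Real.sqrt ‖Γ s s‖ * ‖x‖ := by
            rw [Real.sqrt_mul (norm_nonneg _), Real.sqrt_mul_self (norm_nonneg x)]
    let V : S → (H →L[ℂ] K) := fun s =>
      (UniformSpace.Completion.toComplL (𝕜 := ℂ) (E := S →₀ H)).comp
        (LinearMap.mkContinuous (Finsupp.lsingle s) (Real.sqrt ‖Γ s s‖) (hnorm s))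
    have hV : ∀ (s : S) (x : H), V s x = ((Finsupp.single s x : S →₀ H) : K) := fun s x => rfl
    have hVin : ∀ (s t : S) (x y : H), ⟪V s x, V t y⟫_ℂ = ⟪(Γ s t) x, y⟫_ℂ := by
      intro s t x y
      rw [hV, hV, UniformSpace.Completion.inner_coe]
      exact kin_single Γ s t x y
    refine ⟨K, inferInstance, inferInstance, inferInstance, V, ?_, ?_⟩
    · intro s t
      ext x
      apply ext_inner_right ℂ
      intro y
      rw [ContinuousLinearMap.comp_apply, adjoint_inner_left, hVin]
    · have hsub : Set.range ((↑) : (S →₀ H) → K) ⊆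
          ↑(Submodule.span ℂ {x : K | ∃ (s : S) (h : H), (V s) h = x}) := by
        rintro _ ⟨f, rfl⟩
        have hf : ((f : S →₀ H) : K)
            = ∑ s ∈ f.support, ((Finsupp.single s (f s) : S →₀ H) : K) := by
          conv_lhs => rw [← Finsupp.sum_single f]
          rw [Finsupp.sum]
          exact map_sum (UniformSpace.Completion.toComplL (𝕜 := ℂ) (E := S →₀ H)) _ _
        rw [hf]
        refine Submodule.sum_mem _ fun s _ => Submodule.subset_span ?_
        exact ⟨s, f s, (hV s (f s)).symm⟩
      have hdense : Dense
          (↑(Submodule.span ℂ {x : K | ∃ (s : S) (h : H), (V s) h = x}) : Set K) :=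
        UniformSpace.Completion.denseRange_coe.mono hsub
      rw [eq_top_iff]
      intro x _
      exact hdense x
  · rintro ⟨K, _, _, _, V, hfac, -⟩ h
    have key : (∑ s ∈ h.support, ∑ t ∈ h.support, ⟪(Γ s t) (h s), h t⟫_ℂ)
        = ⟪∑ s ∈ h.support, V s (h s), ∑ t ∈ h.support, V t (h t)⟫_ℂ := by
      rw [sum_inner]
      refine Finset.sum_congr rfl fun s _ => ?_
      rw [inner_sum]
      refine Finset.sum_congr rfl fun t _ => ?_
      rw [hfac s t, ContinuousLinearMap.comp_apply, adjoint_inner_left]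
    rw [key]
    constructor
    · rw [← RCLike.re_to_complex]
      exact inner_self_nonneg
    · rw [← RCLike.im_to_complex]
      exact inner_self_im _
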